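/- For every u ∈ 𝒟 and all reals s, t ≥ 0 one has I(u) ≥ I(s·u⁺ + t·u⁻) + ((1−s^q)/q)·⟨I'(u),u⁺⟩ + ((1−t^q)/q)·⟨I'(u),u⁻⟩ + ((1−s^p)/p − (1−s^q)/q)·‖u⁺‖^p + ((1−t^p)/p − (1−t^q)/q)·‖u⁻‖^p + ∑_{n∈ℤ} a(n) ∑_{i=1}^{p/2−1} ∑_{j=1}^{i−1} 2^{i−j}·|Δu⁺(n)|^{p−(i+j)}·|Δu⁻(n)|^{i+j}·Θ(s,t,i,j), where Θ(s,t,i,j) := [2s^p·C(p/2−1,i)·C(i,j) + s^p·C(p/2−1,i−1)·C(i−1,j) + 2t^p·C(p/2−1,i−1)·C(i−1,j−1) + t^p·C(p/2−1,i−1)·C(i−1,j) − 2·s^{p−(i+j)}·t^{i+j}·C(p/2,i)·C(i,j)]/(2p) satisfies Θ(s,t,i,j) ≥ 0 for all such i, j. -/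

import Mathlib

noncomputable section

open Real Filter Set

namespace DPLap

/-- Forward difference operator. -/
def dlt (u : ℤ → ℝ) (n : ℤ) : ℝ := u (n + 1) - u n

/-- Positive part `u⁺`. -/
def pos (u : ℤ → ℝ) : ℤ → ℝ := fun n => max (u n) 0

/-- Negative part `u⁻`. -/
def neg (u : ℤ → ℝ) : ℤ → ℝ := fun n => min (u n) 0

/-- Summand of the `E`-norm. -/
def nsum (a b : ℤ → ℝ) (p : ℕ) (u : ℤ → ℝ) (n : ℤ) : ℝ :=
  a n * |dlt u n| ^ p + b n * |u n| ^ p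

/-- Membership in the space `E`. -/
def memE (a b : ℤ → ℝ) (p : ℕ) (u : ℤ → ℝ) : Prop :=
  Summable (nsum a b p u)

/-- The norm `‖u‖ = (∑ [a|Δu|^p + b|u|^p])^(1/p)`. -/
def dnorm (a b : ℤ → ℝ) (p : ℕ) (u : ℤ → ℝ) : ℝ :=
  (∑' n : ℤ, nsum a b p u n) ^ ((p : ℝ)⁻¹)

/-- Summand `c(n)|u(n)|^q ln(|u(n)|^r)` of the logarithmic term (with the
convention `0^q ln 0 = 0`, automatic from `Real.rpow` and `Real.log`). -/
def logSummand (c : ℤ → ℝ) (q r : ℝ) (u : ℤ → ℝ) (n : ℤ) : ℝ :=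
  c n * |u n| ^ q * Real.log (|u n| ^ r)

/-- Membership in `𝒟`. -/
def memD (a b c : ℤ → ℝ) (p : ℕ) (q r : ℝ) (u : ℤ → ℝ) : Prop :=
  memE a b p u ∧ Summable (logSummand c q r u)

/-- The energy functional `I`. -/
def En (a b c : ℤ → ℝ) (p : ℕ) (q r : ℝ) (u : ℤ → ℝ) : ℝ :=
  (1 / (p : ℝ)) * dnorm a b p u ^ p
    + (r / q ^ 2) * ∑' n : ℤ, c n * |u n| ^ q
    - (1 / q) * ∑' n : ℤ, logSummand c q r u n

/-- The pairing `⟨I'(u), v⟩`. -/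
def pr (a b c : ℤ → ℝ) (p : ℕ) (q r : ℝ) (u v : ℤ → ℝ) : ℝ :=
  (∑' n : ℤ, (a n * |dlt u n| ^ (p - 2) * dlt u n * dlt v n
      + b n * |u n| ^ (p - 2) * u n * v n))
    - ∑' n : ℤ, c n * |u n| ^ (q - 2) * u n * v n * Real.log (|u n| ^ r)

/-- The Nehari set `𝒩`. -/
def Nset (a b c : ℤ → ℝ) (p : ℕ) (q r : ℝ) : Set (ℤ → ℝ) :=
  {u | memD a b c p q r u ∧ u ≠ 0 ∧ pr a b c p q r u u = 0}

/-- The sign-changing Nehari set `ℳ`. -/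
def Mset (a b c : ℤ → ℝ) (p : ℕ) (q r : ℝ) : Set (ℤ → ℝ) :=
  {u | memD a b c p q r u ∧ pos u ≠ 0 ∧ neg u ≠ 0 ∧
      pr a b c p q r u (pos u) = 0 ∧ pr a b c p q r u (neg u) = 0}

/-- `m* = inf_ℳ I`. -/
def mStar (a b c : ℤ → ℝ) (p : ℕ) (q r : ℝ) : ℝ :=
  sInf (En a b c p q r '' Mset a b c p q r)

/-- `c* = inf_𝒩 I`. -/
def cStar (a b c : ℤ → ℝ) (p : ℕ) (q r : ℝ) : ℝ :=
  sInf (En a b c p q r '' Nset a b c p q r)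

/-- The quantity `Θ(s, t, i, j)` from Lemma 2.2. -/
def Theta (p : ℕ) (s t : ℝ) (i j : ℕ) : ℝ :=
  (2 * s ^ p * ((p / 2 - 1).choose i : ℝ) * (i.choose j : ℝ)
    + s ^ p * ((p / 2 - 1).choose (i - 1) : ℝ) * ((i - 1).choose j : ℝ)
    + 2 * t ^ p * ((p / 2 - 1).choose (i - 1) : ℝ) * ((i - 1).choose (j - 1) : ℝ)
    + t ^ p * ((p / 2 - 1).choose (i - 1) : ℝ) * ((i - 1).choose j : ℝ)
    - 2 * s ^ (p - (i + j)) * t ^ (i + j) * ((p / 2).choose i : ℝ) * (i.choose j : ℝ))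
    / (2 * (p : ℝ))



open Finset in
private def _auxMarker : Unit := ()

open Finset

/-- weighted AM-GM in ℕ-power form -/
lemma amgm {s t : ℝ} (hs : 0 ≤ s) (ht : 0 ≤ t) {p k : ℕ} (hk : k ≤ p) (hp : 0 < p) :
    (p : ℝ) * (s ^ (p - k) * t ^ k) ≤ ((p - k : ℕ) : ℝ) * s ^ p + (k : ℝ) * t ^ p := by
  have hppos : (0:ℝ) < p := by exact_mod_cast hp
  have key : s ^ (p - k) * t ^ k ≤ (((p - k : ℕ) : ℝ)/p) * s ^ p + ((k : ℝ)/p) * t ^ p := by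
    have h1 : (0:ℝ) ≤ ((p - k : ℕ) : ℝ)/p := by positivity
    have h2 : (0:ℝ) ≤ (k : ℝ)/p := by positivity
    have h3 : (0:ℝ) ≤ s ^ p := by positivity
    have h4 : (0:ℝ) ≤ t ^ p := by positivity
    have hw : ((p - k : ℕ) : ℝ)/p + (k : ℝ)/p = 1 := by
      rw [← add_div, div_eq_one_iff_eq (ne_of_gt hppos)]
      exact_mod_cast Nat.sub_add_cancel hk
    have hgm := Real.geom_mean_le_arith_mean2_weighted h1 h2 h3 h4 hw
    have e1 : ((s ^ p : ℝ)) ^ (((p - k : ℕ) : ℝ)/p) = s ^ (p - k) := by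
      rw [← Real.rpow_natCast s p, ← Real.rpow_mul hs,
        show (p:ℝ) * (((p - k : ℕ) : ℝ)/p) = ((p - k : ℕ) : ℝ) by field_simp]
      exact Real.rpow_natCast s (p - k)
    have e2 : ((t ^ p : ℝ)) ^ ((k : ℝ)/p) = t ^ k := by
      rw [← Real.rpow_natCast t p, ← Real.rpow_mul ht,
        show (p:ℝ) * ((k : ℝ)/p) = (k : ℝ) by field_simp]
      exact Real.rpow_natCast t k
    rw [e1, e2] at hgm
    exact hgm
  calc (p:ℝ) * (s ^ (p-k) * t ^ k)
      ≤ (p:ℝ) * ((((p - k : ℕ) : ℝ)/p) * s ^ p + ((k : ℝ)/p) * t ^ p) :=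
        mul_le_mul_of_nonneg_left key (le_of_lt hppos)
    _ = _ := by field_simp

/-- monotonicity of τ ↦ (1-s^τ)/τ -/
lemma mono_pq {P Q s : ℝ} (hP : 0 < P) (hPQ : P ≤ Q) (hs : 0 ≤ s) :
    (1 - s ^ Q)/Q ≤ (1 - s ^ P)/P := by
  have hQ : 0 < Q := lt_of_lt_of_le hP hPQ
  rw [div_le_div_iff₀ hQ hP]
  have key : Q * s ^ P ≤ P * s ^ Q + (Q - P) := by
    have h1 : (0:ℝ) ≤ P/Q := by positivity
    have h2 : (0:ℝ) ≤ 1 - P/Q := by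
      rw [sub_nonneg, div_le_one hQ]; exact hPQ
    have h3 : (0:ℝ) ≤ s ^ Q := Real.rpow_nonneg hs _
    have hw : P/Q + (1 - P/Q) = 1 := by ring
    have hgm := Real.geom_mean_le_arith_mean2_weighted h1 h2 h3 zero_le_one hw
    have heq : (s ^ Q) ^ (P/Q) * (1:ℝ) ^ (1 - P/Q) = s ^ P := by
      rw [Real.one_rpow, mul_one, ← Real.rpow_mul hs]
      congr 1; field_simp
    rw [heq] at hgm
    have h5 := mul_le_mul_of_nonneg_left hgm (le_of_lt hQ)
    have h6 : Q * (P/Q * s ^ Q + (1 - P/Q) * 1) = P * s ^ Q + (Q - P) := by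
      field_simp
    linarith [h5, h6.symm.le, h6.le]
  nlinarith [key]

lemma one_sub_add_log {y : ℝ} (hy : 0 < y) : 0 ≤ 1 - y + y * Real.log y := by
  have h := Real.log_le_sub_one_of_pos (show (0:ℝ) < y⁻¹ by positivity)
  rw [Real.log_inv] at h
  have h2 := mul_le_mul_of_nonneg_left h (le_of_lt hy)
  have hy' : y * (y⁻¹ - 1) = 1 - y := by field_simp
  nlinarith [h2]

lemma neg_log_le {x δ : ℝ} (hx : 0 < x) (hδ : 0 < δ) : -Real.log x ≤ x ^ (-δ) / δ := by
  have h : Real.log (x ^ (-δ)) ≤ x ^ (-δ) - 1 :=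
    Real.log_le_sub_one_of_pos (Real.rpow_pos_of_pos hx _)
  rw [Real.log_rpow hx] at h
  have hxp : (0:ℝ) < x ^ (-δ) := Real.rpow_pos_of_pos hx _
  rw [le_div_iff₀ hδ]
  nlinarith [h]

/-- x^q |log (x^r)| ≤ (r/(q-p)) x^p for 0 ≤ x ≤ 1 -/
lemma logpow_bound {x q r pp : ℝ} (hx0 : 0 ≤ x) (hx1 : x ≤ 1) (hr : 0 < r)
    (hpq : pp < q) (hp : 0 < pp) :
    x ^ q * |Real.log (x ^ r)| ≤ (r/(q - pp)) * x ^ pp := by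
  rcases eq_or_lt_of_le hx0 with h|h
  · rw [← h, Real.zero_rpow (ne_of_gt (lt_trans hp hpq)), Real.zero_rpow (ne_of_gt hp)]
    simp
  · have hδ : 0 < q - pp := by linarith
    have hlog : Real.log x ≤ 0 := Real.log_nonpos hx0 hx1
    have h1 : |Real.log (x ^ r)| = r * (-Real.log x) := by
      rw [Real.log_rpow h, abs_mul, abs_of_pos hr, abs_of_nonpos hlog]
    rw [h1]
    have h2 : -Real.log x ≤ x ^ (-(q - pp)) / (q - pp) := neg_log_le h hδ
    have h3 : x ^ q * (r * (-Real.log x)) ≤ x ^ q * (r * (x ^ (-(q-pp))/(q-pp))) := by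
      apply mul_le_mul_of_nonneg_left _ (Real.rpow_nonneg hx0 _)
      exact mul_le_mul_of_nonneg_left h2 (le_of_lt hr)
    refine h3.trans (le_of_eq ?_)
    rw [show x ^ q * (r * (x ^ (-(q-pp))/(q-pp))) = (r/(q-pp)) * (x ^ q * x ^ (-(q-pp))) by ring,
      ← Real.rpow_add h, show q + -(q-pp) = pp by ring]

/-- (m-i) C(m,i) = m C(m-1,i) -/
lemma nat_id1 (m i : ℕ) : (m - i) * m.choose i = m * (m-1).choose i := by
  cases m with
  | zero => rcases i with _|i <;> simp
  | succ m' =>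
      simp only [Nat.add_sub_cancel]
      rw [Nat.mul_comm, ← Nat.choose_succ_right_eq, ← Nat.add_one_mul_choose_eq]

/-- i C(m,i) = m C(m-1,i-1) for i ≥ 1 -/
lemma nat_id2 (m i : ℕ) (hi : 1 ≤ i) : i * m.choose i = m * (m-1).choose (i-1) := by
  obtain ⟨i', rfl⟩ : ∃ i', i = i' + 1 := ⟨i - 1, by omega⟩
  cases m with
  | zero => simp [Nat.choose_eq_zero_of_lt (by omega : 0 < i' + 1)]
  | succ m' =>
      simp only [Nat.add_sub_cancel]
      rw [Nat.mul_comm, ← Nat.add_one_mul_choose_eq]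




/-- the generic monomial -/
def mono (m : ℕ) (u v : ℝ) (i j : ℕ) : ℝ :=
  (m.choose i : ℝ) * (i.choose j : ℝ) * 2^(i-j) * u^(2*m - (i+j)) * v^(i+j)

lemma trinom (m : ℕ) (u v : ℝ) :
    (u + v)^(2*m) = ∑ i ∈ range (m+1), ∑ j ∈ range (i+1), mono m u v i j := by
  have h1 : (u+v)^(2*m) = ((2*u*v + v^2) + u^2)^m := by
    rw [pow_mul]; ring_nf
  rw [h1, add_pow]
  refine Finset.sum_congr rfl (fun i hi => ?_)
  have him : i ≤ m := by simpa [Nat.lt_succ_iff] using hi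
  have h2 : (2*u*v + v^2 : ℝ) = v^2 + 2*u*v := by ring
  rw [h2, add_pow, Finset.sum_mul, Finset.sum_mul]
  refine Finset.sum_congr rfl (fun j hj => ?_)
  have hji : j ≤ i := by simpa [Nat.lt_succ_iff] using hj
  unfold mono
  have e1 : ((2:ℝ)*u*v)^(i-j) = 2^(i-j) * u^(i-j) * v^(i-j) := by
    rw [mul_pow, mul_pow]
  have e2 : ((v:ℝ)^2)^j = v^(2*j) := by rw [← pow_mul]
  have e3 : ((u:ℝ)^2)^(m-i) = u^(2*(m-i)) := by rw [← pow_mul]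
  rw [e1, e2, e3,
    show 2*m - (i+j) = 2*(m-i) + (i-j) by omega,
    show i+j = 2*j + (i-j) by omega, pow_add, pow_add]
  ring

lemma euler1 (m : ℕ) (hm : 1 ≤ m) (u v : ℝ) :
    (2*m : ℝ) * u * (u+v)^(2*m-1)
      = ∑ i ∈ range (m+1), ∑ j ∈ range (i+1),
          ((2*m - (i+j) : ℕ) : ℝ) * mono m u v i j := by
  -- split 2m - (i+j) = 2(m-i) + (i-j)
  have split : ∀ i ∈ range (m+1), ∀ j ∈ range (i+1),
      ((2*m - (i+j) : ℕ) : ℝ) * mono m u v i j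
        = (2:ℝ) * ((m-i : ℕ) : ℝ) * mono m u v i j + ((i-j : ℕ) : ℝ) * mono m u v i j := by
    intro i hi j hj
    have him : i ≤ m := by simpa [Nat.lt_succ_iff] using hi
    have hji : j ≤ i := by simpa [Nat.lt_succ_iff] using hj
    have : ((2*m - (i+j) : ℕ) : ℝ) = 2 * ((m-i : ℕ) : ℝ) + ((i-j : ℕ) : ℝ) := by
      push_cast [Nat.cast_sub (by omega : i + j ≤ 2*m), Nat.cast_sub him, Nat.cast_sub hji]
      ring
    rw [this]; ring
  rw [Finset.sum_congr rfl (fun i hi => Finset.sum_congr rfl (fun j hj => split i hi j hj))]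
  simp only [Finset.sum_add_distrib]
  -- Part 1 : ∑ 2(m-i) mono = 2m u² (u+v)^(2m-2)
  have part1 : ∑ i ∈ range (m+1), ∑ j ∈ range (i+1), (2:ℝ) * ((m-i : ℕ) : ℝ) * mono m u v i j
      = (2*m : ℝ) * u^2 * (u+v)^(2*(m-1)) := by
    have key : ∀ i ∈ range (m+1), ∀ j ∈ range (i+1),
        (2:ℝ) * ((m-i : ℕ) : ℝ) * mono m u v i j
          = (2*m : ℝ) * u^2 * ((((m-1).choose i : ℕ) : ℝ) * (i.choose j : ℝ) * 2^(i-j)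
              * u^(2*(m-1) - (i+j)) * v^(i+j)) := by
      intro i hi j hj
      have him : i ≤ m := by simpa [Nat.lt_succ_iff] using hi
      have hji : j ≤ i := by simpa [Nat.lt_succ_iff] using hj
      unfold mono
      rcases Nat.lt_or_ge i m with h|h
      · -- i ≤ m - 1 : use nat_id1 and u^(2m -(i+j)) = u^2 * u^(2(m-1)-(i+j))
        have hc : ((m-i : ℕ) : ℝ) * (m.choose i : ℕ) = (m : ℝ) * ((m-1).choose i : ℕ) := by
          exact_mod_cast congrArg (Nat.cast (R := ℝ)) (nat_id1 m i)
        have hexp : 2*m - (i+j) = 2 + (2*(m-1) - (i+j)) := by omega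
        rw [hexp, pow_add]
        linear_combination (2 * (i.choose j : ℝ) * 2^(i-j) * (u^2 * u^(2*(m-1)-(i+j))) * v^(i+j)) * hc
      · -- i = m : both sides zero
        have h0 : m - i = 0 := by omega
        rw [h0, Nat.choose_eq_zero_of_lt (show m - 1 < i by omega)]
        simp
    rw [Finset.sum_congr rfl (fun i hi => Finset.sum_congr rfl (fun j hj => key i hi j hj))]
    simp only [← Finset.mul_sum]
    congr 1
    -- ∑_{i ≤ m} ∑_{j ≤ i} coeff = (u+v)^(2(m-1)) ; extends trinom for m-1, extra i = m row is zero
    rw [trinom (m-1) u v]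
    unfold mono
    rw [show m + 1 = (m - 1 + 1) + 1 by omega, Finset.sum_range_succ]
    have hz : ∑ j ∈ range (m - 1 + 1 + 1),
        (((m-1).choose (m-1+1) : ℕ) : ℝ) * ((m-1+1).choose j : ℝ) * 2^((m-1+1)-j)
          * u^(2*(m-1) - ((m-1+1)+j)) * v^((m-1+1)+j) = 0 := by
      apply Finset.sum_eq_zero
      intro j hj
      rw [Nat.choose_eq_zero_of_lt (by omega : m - 1 < m - 1 + 1)]
      simp
    rw [hz, add_zero]
  -- Part 2 : ∑ (i-j) mono = 2m u v (u+v)^(2(m-1))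
  have part2 : ∑ i ∈ range (m+1), ∑ j ∈ range (i+1), ((i-j : ℕ) : ℝ) * mono m u v i j
      = (2*m : ℝ) * (u*v) * (u+v)^(2*(m-1)) := by
    rw [Finset.sum_range_succ']
    have h0 : ∑ j ∈ range (0+1), ((0-j : ℕ) : ℝ) * mono m u v 0 j = 0 := by
      simp
    rw [h0, add_zero]
    have key : ∀ i' ∈ range m,
        ∑ j ∈ range (i'+1+1), ((i'+1-j : ℕ) : ℝ) * mono m u v (i'+1) j
          = (2*m : ℝ) * (u*v) * (∑ j ∈ range (i'+1), mono (m-1) u v i' j) := by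
      intro i' hi'
      have him : i' + 1 ≤ m := by have := Finset.mem_range.mp hi'; omega
      rw [Finset.sum_range_succ]
      have hlast : ((i'+1-(i'+1) : ℕ) : ℝ) * mono m u v (i'+1) (i'+1) = 0 := by
        simp
      rw [hlast, add_zero, Finset.mul_sum]
      refine Finset.sum_congr rfl (fun j hj => ?_)
      have hji : j ≤ i' := by simpa [Nat.lt_succ_iff] using hj
      unfold mono
      have hc1 : ((i'+1-j : ℕ) : ℝ) * ((i'+1).choose j : ℕ) = ((i'+1 : ℕ) : ℝ) * (i'.choose j : ℕ) := by
        have := nat_id1 (i'+1) j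
        simp only [Nat.add_sub_cancel] at this
        exact_mod_cast congrArg (Nat.cast (R := ℝ)) this
      have hc2 : ((i'+1 : ℕ) : ℝ) * (m.choose (i'+1) : ℕ) = (m : ℝ) * ((m-1).choose i' : ℕ) := by
        have := nat_id2 m (i'+1) (by omega)
        simp only [Nat.add_sub_cancel] at this
        exact_mod_cast congrArg (Nat.cast (R := ℝ)) this
      rw [show i'+1-j = (i'-j)+1 by omega] at hc1
      rw [show i'+1-j = (i'-j)+1 by omega, show 2*m - (i'+1+j) = (2*(m-1)-(i'+j)) + 1 by omega,
        show i'+1+j = (i'+j)+1 by omega, pow_succ, pow_succ, pow_succ]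
      push_cast at hc1 hc2 ⊢
      linear_combination ((m.choose (i'+1) : ℝ) * ((2:ℝ)^(i'-j) * 2 * (u^(2*(m-1)-(i'+j)) * u) * (v^(i'+j) * v))) * hc1
        + (((i'.choose j : ℝ)) * ((2:ℝ)^(i'-j) * 2 * (u^(2*(m-1)-(i'+j)) * u) * (v^(i'+j) * v))) * hc2
    rw [Finset.sum_congr rfl key, ← Finset.mul_sum]
    congr 1
    rw [trinom (m-1) u v, show m - 1 + 1 = m by omega]
  rw [part1, part2,
    show 2*(m-1) = 2*m-1-1 by omega,
    show (2*m : ℝ) * u * (u+v)^(2*m-1) = (2*m : ℝ) * u * ((u+v) * (u+v)^(2*m-1-1)) by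
      rw [← pow_succ']; congr 2; omega]
  ring

lemma euler2 (m : ℕ) (hm : 1 ≤ m) (u v : ℝ) :
    (2*m : ℝ) * v * (u+v)^(2*m-1)
      = ∑ i ∈ range (m+1), ∑ j ∈ range (i+1),
          ((i+j : ℕ) : ℝ) * mono m u v i j := by
  have key : ∀ i ∈ range (m+1), ∀ j ∈ range (i+1),
      ((i+j : ℕ) : ℝ) * mono m u v i j
        = (2*m : ℝ) * mono m u v i j - ((2*m - (i+j) : ℕ) : ℝ) * mono m u v i j := by
    intro i hi j hj
    have him : i ≤ m := by simpa [Nat.lt_succ_iff] using hi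
    have hji : j ≤ i := by simpa [Nat.lt_succ_iff] using hj
    have : ((2*m - (i+j) : ℕ) : ℝ) = 2*(m:ℝ) - ((i+j : ℕ) : ℝ) := by
      push_cast [Nat.cast_sub (by omega : i + j ≤ 2*m)]; ring
    rw [this]; ring
  rw [Finset.sum_congr rfl (fun i hi => Finset.sum_congr rfl (fun j hj => key i hi j hj))]
  simp only [Finset.sum_sub_distrib]
  rw [← euler1 m hm u v]
  simp only [← Finset.mul_sum]
  rw [← trinom m u v,
    show (u+v)^(2*m) = (u+v) * (u+v)^(2*m-1) by rw [← pow_succ']; congr 1; omega]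
  ring






/-- the AM-GM bracket -/
def brk (p : ℕ) (s t : ℝ) (k : ℕ) : ℝ :=
  ((p - k : ℕ) : ℝ) * s ^ p + (k : ℝ) * t ^ p - (p : ℝ) * (s ^ (p - k) * t ^ k)

lemma brk_nonneg {s t : ℝ} (hs : 0 ≤ s) (ht : 0 ≤ t) {p k : ℕ} (hk : k ≤ p) (hp : 0 < p) :
    0 ≤ brk p s t k := by
  have := amgm hs ht hk hp
  unfold brk; linarith

lemma theta_formula (p : ℕ) (hp2 : 2 ≤ p) (hpe : Even p) (s t : ℝ) {i j : ℕ}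
    (hi1 : 1 ≤ i) (hi2 : i ≤ p/2 - 1) (hj1 : 1 ≤ j) (hj2 : j ≤ i - 1) :
    Theta p s t i j
      = ((p/2).choose i : ℝ) * (i.choose j : ℝ) / (p:ℝ)^2 * brk p s t (i+j) := by
  set m := p / 2 with hm
  have hpm : p = 2 * m := by
    rcases hpe with ⟨w, hw⟩; omega
  have hm1 : 2 ≤ m := by omega
  have him : i ≤ m - 1 := hi2
  have hij : j ≤ i - 1 := hj2
  have hk : i + j ≤ p := by omega
  -- real cast identities
  have A1 : ((m:ℝ) - i) * (m.choose i : ℕ) = (m:ℝ) * ((m-1).choose i : ℕ) := by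
    have := congrArg (Nat.cast (R := ℝ)) (nat_id1 m i)
    push_cast [Nat.cast_sub (show i ≤ m by omega)] at this
    exact_mod_cast this
  have A2 : (i:ℝ) * (m.choose i : ℕ) = (m:ℝ) * ((m-1).choose (i-1) : ℕ) := by
    exact_mod_cast congrArg (Nat.cast (R := ℝ)) (nat_id2 m i hi1)
  have A3 : ((i:ℝ) - j) * (i.choose j : ℕ) = (i:ℝ) * ((i-1).choose j : ℕ) := by
    have := congrArg (Nat.cast (R := ℝ)) (nat_id1 i j)
    push_cast [Nat.cast_sub (show j ≤ i by omega)] at this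
    exact_mod_cast this
  have A4 : (j:ℝ) * (i.choose j : ℕ) = (i:ℝ) * ((i-1).choose (j-1) : ℕ) := by
    exact_mod_cast congrArg (Nat.cast (R := ℝ)) (nat_id2 i j hj1)
  have a_real : (p:ℝ) * (2*((m-1).choose i : ℕ)*(i.choose j : ℕ)
        + ((m-1).choose (i-1) : ℕ)*((i-1).choose j : ℕ))
      = 2*(((p:ℝ)) - (i+j)) * (m.choose i : ℕ) * (i.choose j : ℕ) := by
    have hpc : (p:ℝ) = 2*(m:ℝ) := by exact_mod_cast hpm
    rw [hpc]
    linear_combination (-(4*((i.choose j : ℕ):ℝ))) * A1 + (-(2*(((i-1).choose j : ℕ):ℝ))) * A2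
      + (-(2*((m.choose i : ℕ):ℝ))) * A3
  have b_real : (p:ℝ) * (2*((m-1).choose (i-1) : ℕ)*((i-1).choose (j-1) : ℕ)
        + ((m-1).choose (i-1) : ℕ)*((i-1).choose j : ℕ))
      = 2*((i:ℝ)+j) * (m.choose i : ℕ) * (i.choose j : ℕ) := by
    have hpc : (p:ℝ) = 2*(m:ℝ) := by exact_mod_cast hpm
    rw [hpc]
    linear_combination (-(2*(2*(((i-1).choose (j-1) : ℕ):ℝ) + (((i-1).choose j : ℕ):ℝ)))) * A2
      + (-(4*((m.choose i : ℕ):ℝ))) * A4 + (-(2*((m.choose i : ℕ):ℝ))) * A3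
  have hp0 : (p:ℝ) ≠ 0 := by positivity
  have hcastpk : ((p - (i+j) : ℕ) : ℝ) = (p:ℝ) - (i+j) := by
    push_cast [Nat.cast_sub hk]; ring
  unfold Theta brk
  rw [hcastpk]
  field_simp
  push_cast
  linear_combination s^p * a_real + t^p * b_real

lemma theta_nonneg (p : ℕ) (hp2 : 2 ≤ p) (hpe : Even p) {s t : ℝ}
    (hs : 0 ≤ s) (ht : 0 ≤ t) {i j : ℕ}
    (hi1 : 1 ≤ i) (hi2 : i ≤ p/2 - 1) (hj1 : 1 ≤ j) (hj2 : j ≤ i - 1) :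
    0 ≤ Theta p s t i j := by
  rw [theta_formula p hp2 hpe s t hi1 hi2 hj1 hj2]
  have h1 : (0:ℝ) ≤ ((p/2).choose i : ℝ) * (i.choose j : ℝ) / (p:ℝ)^2 := by positivity
  have h2 : 0 ≤ brk p s t (i+j) := brk_nonneg hs ht (by omega) (by omega)
  positivity


/-- full-range expansion of R -/
lemma R_expand (p : ℕ) (hp2 : 2 ≤ p) (hpe : Even p)
    (s t α β : ℝ) :
    (p:ℝ)^2 * ((s^p/(p:ℝ)) * ((α+β)^(p-1) * α) + (t^p/(p:ℝ)) * ((α+β)^(p-1) * β)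
        - (1/(p:ℝ)) * (s*α + t*β)^p)
      = ∑ i ∈ range (p/2+1), ∑ j ∈ range (i+1),
          mono (p/2) α β i j * brk p s t (i+j) := by
  set m := p / 2 with hmdef
  have hpm : p = 2 * m := by rcases hpe with ⟨w, hw⟩; omega
  have hm1 : 1 ≤ m := by omega
  have hp0 : (p:ℝ) ≠ 0 := by positivity
  have e1 : (p:ℝ) * ((α+β)^(p-1) * α)
      = ∑ i ∈ range (m+1), ∑ j ∈ range (i+1), ((2*m - (i+j) : ℕ) : ℝ) * mono m α β i j := by
    rw [← euler1 m hm1 α β, hpm]; push_cast; ring_nf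
  have e2 : (p:ℝ) * ((α+β)^(p-1) * β)
      = ∑ i ∈ range (m+1), ∑ j ∈ range (i+1), ((i+j : ℕ) : ℝ) * mono m α β i j := by
    rw [← euler2 m hm1 α β, hpm]; push_cast; ring_nf
  have e3 : (s*α + t*β)^p
      = ∑ i ∈ range (m+1), ∑ j ∈ range (i+1), (s^(p-(i+j)) * t^(i+j)) * mono m α β i j := by
    rw [hpm, show s*α + t*β = s*α + t*β from rfl, trinom m (s*α) (t*β)]
    refine Finset.sum_congr rfl (fun i hi => Finset.sum_congr rfl (fun j hj => ?_))
    have him : i ≤ m := by simpa [Nat.lt_succ_iff] using hi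
    have hji : j ≤ i := by simpa [Nat.lt_succ_iff] using hj
    unfold mono
    rw [mul_pow, mul_pow]
    ring
  have key : (p:ℝ)^2 * ((s^p/(p:ℝ)) * ((α+β)^(p-1) * α) + (t^p/(p:ℝ)) * ((α+β)^(p-1) * β)
        - (1/(p:ℝ)) * (s*α + t*β)^p)
      = s^p * ((p:ℝ) * ((α+β)^(p-1) * α)) + t^p * ((p:ℝ) * ((α+β)^(p-1) * β))
        - (p:ℝ) * (s*α + t*β)^p := by
    field_simp
  rw [key, e1, e2, e3]
  simp only [Finset.mul_sum]
  rw [← Finset.sum_add_distrib, ← Finset.sum_sub_distrib]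
  refine Finset.sum_congr rfl (fun i hi => ?_)
  rw [← Finset.sum_add_distrib, ← Finset.sum_sub_distrib]
  refine Finset.sum_congr rfl (fun j hj => ?_)
  have him : i ≤ m := by simpa [Nat.lt_succ_iff] using hi
  have hji : j ≤ i := by simpa [Nat.lt_succ_iff] using hj
  unfold brk
  have c1 : ((p - (i+j) : ℕ) : ℝ) = (p:ℝ) - (i+j) := by
    push_cast [Nat.cast_sub (show i + j ≤ p by omega)]; ring
  have c2 : ((2*m - (i+j) : ℕ) : ℝ) = (p:ℝ) - (i+j) := by
    push_cast [Nat.cast_sub (show i + j ≤ 2*m by omega), hpm]; ring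
  rw [c1, c2]
  ring

/-- The core two-variable inequality -/
lemma core (p : ℕ) (hp2 : 2 ≤ p) (hpe : Even p) (q : ℝ) (hpq : (p:ℝ) < q)
    {s t α β : ℝ} (hs : 0 ≤ s) (ht : 0 ≤ t) (hα : 0 ≤ α) (hβ : 0 ≤ β) :
    (1/(p:ℝ)) * (s*α + t*β)^p
    + ((1 - s^q)/q) * ((α+β)^(p-1) * α)
    + ((1 - t^q)/q) * ((α+β)^(p-1) * β)
    + ((1 - s^p)/(p:ℝ) - (1 - s^q)/q) * α^p
    + ((1 - t^p)/(p:ℝ) - (1 - t^q)/q) * β^p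
    + (∑ i ∈ Finset.Icc 1 (p/2 - 1), ∑ j ∈ Finset.Icc 1 (i-1),
        (2:ℝ)^(i-j) * α^(p-(i+j)) * β^(i+j) * Theta p s t i j)
    ≤ (1/(p:ℝ)) * (α+β)^p := by
  set m := p / 2 with hmdef
  have hpm : p = 2 * m := by rcases hpe with ⟨w, hw⟩; omega
  have hppos : (0:ℝ) < p := by positivity
  have hq0 : (0:ℝ) < q := lt_trans hppos hpq
  -- rpow vs npow conversions
  have hsq : s ^ (p:ℝ) = s ^ p := Real.rpow_natCast s p
  have htq : t ^ (p:ℝ) = t ^ p := Real.rpow_natCast t p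
  -- monotonicity facts
  have hA : (1 - s^q)/q ≤ (1 - s^p)/(p:ℝ) := by
    rw [← hsq]; exact mono_pq hppos (le_of_lt hpq) hs
  have hB : (1 - t^q)/q ≤ (1 - t^p)/(p:ℝ) := by
    rw [← htq]; exact mono_pq hppos (le_of_lt hpq) ht
  -- positivity of pieces
  have hm1 : 1 ≤ m := by omega
  -- interior theta sum = interior part of full sum / p²
  have hTsum : ∑ i ∈ Finset.Icc 1 (m - 1), ∑ j ∈ Finset.Icc 1 (i-1),
        (2:ℝ)^(i-j) * α^(p-(i+j)) * β^(i+j) * Theta p s t i j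
      = (1/(p:ℝ)^2) * ∑ i ∈ Finset.Icc 1 (m - 1), ∑ j ∈ Finset.Icc 1 (i-1),
          mono m α β i j * brk p s t (i+j) := by
    rw [Finset.mul_sum]
    refine Finset.sum_congr rfl (fun i hi => ?_)
    rw [Finset.mul_sum]
    refine Finset.sum_congr rfl (fun j hj => ?_)
    obtain ⟨hi1, hi2⟩ := Finset.mem_Icc.mp hi
    obtain ⟨hj1, hj2⟩ := Finset.mem_Icc.mp hj
    rw [theta_formula p hp2 hpe s t hi1 hi2 hj1 hj2]
    unfold mono
    rw [show 2*m - (i+j) = p - (i+j) by omega]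
    field_simp
    ring
  -- the interior sum is bounded by the full sum
  have hterm_nonneg : ∀ i ∈ range (m+1), ∀ j ∈ range (i+1),
      0 ≤ mono m α β i j * brk p s t (i+j) := by
    intro i hi j hj
    have him : i ≤ m := by simpa [Nat.lt_succ_iff] using hi
    have hji : j ≤ i := by simpa [Nat.lt_succ_iff] using hj
    have h1 : 0 ≤ mono m α β i j := by
      unfold mono; positivity
    have h2 : 0 ≤ brk p s t (i+j) := brk_nonneg hs ht (by omega) (by omega)
    exact mul_nonneg h1 h2
  have hsub : ∑ i ∈ Finset.Icc 1 (m - 1), ∑ j ∈ Finset.Icc 1 (i-1),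
        mono m α β i j * brk p s t (i+j)
      ≤ ∑ i ∈ range (m+1), ∑ j ∈ range (i+1), mono m α β i j * brk p s t (i+j) := by
    have step1 : ∑ i ∈ Finset.Icc 1 (m - 1), ∑ j ∈ Finset.Icc 1 (i-1),
          mono m α β i j * brk p s t (i+j)
        ≤ ∑ i ∈ Finset.Icc 1 (m - 1), ∑ j ∈ range (i+1), mono m α β i j * brk p s t (i+j) := by
      refine Finset.sum_le_sum (fun i hi => ?_)
      obtain ⟨hi1, hi2⟩ := Finset.mem_Icc.mp hi
      refine Finset.sum_le_sum_of_subset_of_nonneg ?_ (fun j hj _ => ?_)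
      · intro j hj
        obtain ⟨h1, h2⟩ := Finset.mem_Icc.mp hj
        exact Finset.mem_range.mpr (by omega)
      · exact hterm_nonneg i (Finset.mem_range.mpr (by omega)) j hj
    refine step1.trans ?_
    refine Finset.sum_le_sum_of_subset_of_nonneg ?_ (fun i hi _ => ?_)
    · intro i hi
      obtain ⟨h1, h2⟩ := Finset.mem_Icc.mp hi
      exact Finset.mem_range.mpr (by omega)
    · exact Finset.sum_nonneg (fun j hj => hterm_nonneg i hi j hj)
  -- now assemble
  have hR := R_expand p hp2 hpe s t α β
  -- positivity facts for the two bracket terms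
  have hpow1 : α^p ≤ (α+β)^(p-1) * α := by
    rcases eq_or_lt_of_le hα with h|h
    · rw [← h]; simp [zero_pow (show p ≠ 0 by omega)]
    · calc α^p = α^(p-1) * α := by rw [← pow_succ]; congr 1; omega
        _ ≤ (α+β)^(p-1) * α := by
          apply mul_le_mul_of_nonneg_right _ hα
          exact pow_le_pow_left₀ hα (by linarith) _
  have hpow2 : β^p ≤ (α+β)^(p-1) * β := by
    rcases eq_or_lt_of_le hβ with h|h
    · rw [← h]; simp [zero_pow (show p ≠ 0 by omega)]
    · calc β^p = β^(p-1) * β := by rw [← pow_succ]; congr 1; omega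
        _ ≤ (α+β)^(p-1) * β := by
          apply mul_le_mul_of_nonneg_right _ hβ
          exact pow_le_pow_left₀ hβ (by linarith) _
  have hsp : (0:ℝ) ≤ s^p := by positivity
  have htp : (0:ℝ) ≤ t^p := by positivity
  have hfin : (α+β)^p = (α+β)^(p-1) * (α+β) := by
    rw [← pow_succ]; congr 1; omega
  -- combine: (1/p)(α+β)^p - LHS =
  --   ((1-s^q)/... ) rearrangement
  have key : (1/(p:ℝ)) * (α+β)^p
      - ((1/(p:ℝ)) * (s*α + t*β)^p
        + ((1 - s^q)/q) * ((α+β)^(p-1) * α)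
        + ((1 - t^q)/q) * ((α+β)^(p-1) * β)
        + ((1 - s^p)/(p:ℝ) - (1 - s^q)/q) * α^p
        + ((1 - t^p)/(p:ℝ) - (1 - t^q)/q) * β^p
        + (∑ i ∈ Finset.Icc 1 (m - 1), ∑ j ∈ Finset.Icc 1 (i-1),
            (2:ℝ)^(i-j) * α^(p-(i+j)) * β^(i+j) * Theta p s t i j))
      = ((1 - s^p)/(p:ℝ) - (1 - s^q)/q) * ((α+β)^(p-1) * α - α^p)
        + ((1 - t^p)/(p:ℝ) - (1 - t^q)/q) * ((α+β)^(p-1) * β - β^p)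
        + ((s^p/(p:ℝ)) * ((α+β)^(p-1) * α) + (t^p/(p:ℝ)) * ((α+β)^(p-1) * β)
            - (1/(p:ℝ)) * (s*α + t*β)^p)
        - (∑ i ∈ Finset.Icc 1 (m - 1), ∑ j ∈ Finset.Icc 1 (i-1),
            (2:ℝ)^(i-j) * α^(p-(i+j)) * β^(i+j) * Theta p s t i j) := by
    rw [hfin]
    field_simp
    ring
  have hRfrac : (s^p/(p:ℝ)) * ((α+β)^(p-1) * α) + (t^p/(p:ℝ)) * ((α+β)^(p-1) * β)
        - (1/(p:ℝ)) * (s*α + t*β)^p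
      = (1/(p:ℝ)^2) * ∑ i ∈ range (m+1), ∑ j ∈ range (i+1),
          mono m α β i j * brk p s t (i+j) := by
    rw [← hR]; field_simp
  rw [← sub_nonneg, key, hRfrac, hTsum]
  have hd1 : 0 ≤ ((1 - s^p)/(p:ℝ) - (1 - s^q)/q) * ((α+β)^(p-1) * α - α^p) :=
    mul_nonneg (by linarith) (by linarith)
  have hd2 : 0 ≤ ((1 - t^p)/(p:ℝ) - (1 - t^q)/q) * ((α+β)^(p-1) * β - β^p) :=
    mul_nonneg (by linarith) (by linarith)
  have hd3 : (1/(p:ℝ)^2) * (∑ i ∈ Finset.Icc 1 (m - 1), ∑ j ∈ Finset.Icc 1 (i-1),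
        mono m α β i j * brk p s t (i+j))
      ≤ (1/(p:ℝ)^2) * ∑ i ∈ range (m+1), ∑ j ∈ range (i+1),
          mono m α β i j * brk p s t (i+j) := by
    apply mul_le_mul_of_nonneg_left hsub
    positivity
  linarith




/-- sign coherence of differences of positive/negative parts -/
lemma sign_coherence (x y : ℝ) :
    0 ≤ (max y 0 - max x 0) * (min y 0 - min x 0) := by
  rcases le_total x 0 with hx|hx <;> rcases le_total y 0 with hy|hy
  · rw [max_eq_right hx, max_eq_right hy]; simp
  · rw [max_eq_right hx, min_eq_left hx, max_eq_left hy, min_eq_right hy]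
    nlinarith
  · rw [max_eq_left hx, min_eq_right hx, max_eq_right hy, min_eq_left hy]
    nlinarith
  · rw [min_eq_right hx, min_eq_right hy]; simp

/-- scalar helper for the b,c-part with one sign -/
lemma bc_helper {p : ℕ} (hp2 : 2 ≤ p) {q r : ℝ} (hpq : (p:ℝ) < q) (hr : 1 ≤ r)
    {B C σ y : ℝ} (hB : 0 ≤ B) (hC : 0 ≤ C) (hσ : 0 ≤ σ) (hy : 0 ≤ y) :
    (1/(p:ℝ)) * (B * (σ*y)^p) + (r/q^2) * (C * (σ*y)^q)
      - (1/q) * (C * (σ*y)^q * Real.log ((σ*y)^r))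
      + ((1 - σ^q)/q) * (B * y^p - C * y^q * Real.log (y^r))
      + ((1 - σ^p)/(p:ℝ) - (1 - σ^q)/q) * (B * y^p)
    ≤ (1/(p:ℝ)) * (B * y^p) + (r/q^2) * (C * y^q) - (1/q) * (C * y^q * Real.log (y^r)) := by
  have hppos : (0:ℝ) < p := by positivity
  have hq : (0:ℝ) < q := lt_trans hppos hpq
  have hrpos : (0:ℝ) < r := lt_of_lt_of_le one_pos hr
  -- B-part identity
  have hBpart : (1/(p:ℝ)) * (B * (σ*y)^p) + ((1 - σ^q)/q) * (B * y^p)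
      + ((1 - σ^p)/(p:ℝ) - (1 - σ^q)/q) * (B * y^p) = (1/(p:ℝ)) * (B * y^p) := by
    rw [mul_pow]
    field_simp
    ring
  -- C-part inequality
  have hCpart : (r/q^2) * (C * (σ*y)^q) - (1/q) * (C * (σ*y)^q * Real.log ((σ*y)^r))
      + ((1 - σ^q)/q) * (- C * y^q * Real.log (y^r))
      ≤ (r/q^2) * (C * y^q) - (1/q) * (C * y^q * Real.log (y^r)) := by
    rcases eq_or_lt_of_le hy with h|hy'
    · -- y = 0
      rw [← h]
      have h0 : (σ*(0:ℝ))^q = 0 := by rw [mul_zero]; exact Real.zero_rpow (ne_of_gt hq)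
      have h1 : ((0:ℝ))^q = 0 := Real.zero_rpow (ne_of_gt hq)
      rw [h0, h1]
      simp
    rcases eq_or_lt_of_le hσ with h|hσ'
    · -- σ = 0
      rw [← h]
      have h0 : ((0:ℝ)*y)^q = 0 := by rw [zero_mul]; exact Real.zero_rpow (ne_of_gt hq)
      have h1 : ((0:ℝ))^q = 0 := Real.zero_rpow (ne_of_gt hq)
      have hlog : Real.log (y^r) = r * Real.log y := Real.log_rpow hy' r
      have hpos : (0:ℝ) ≤ (r/q^2) * (C * y^q) := by
        have := Real.rpow_nonneg hy q
        positivity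
      rw [h0, h1, hlog]
      nlinarith [hpos]
    · -- σ > 0, y > 0
      set Y := σ ^ q with hY
      set G := y ^ q with hG
      have hYpos : 0 < Y := Real.rpow_pos_of_pos hσ' q
      have hGpos : 0 < G := Real.rpow_pos_of_pos hy' q
      have hσy : (σ*y)^q = Y * G := Real.mul_rpow (le_of_lt hσ') (le_of_lt hy')
      have hlog1 : Real.log ((σ*y)^r) = r * (Real.log σ + Real.log y) := by
        rw [Real.log_rpow (by positivity), Real.log_mul (ne_of_gt hσ') (ne_of_gt hy')]
      have hlog2 : Real.log (y^r) = r * Real.log y := Real.log_rpow hy' r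
      have hYlog : Real.log Y = q * Real.log σ := Real.log_rpow hσ' q
      have hkey := one_sub_add_log hYpos
      rw [hYlog] at hkey
      -- RHS - LHS = (r/q²) C G (1 - Y + Y q log σ) ≥ 0
      rw [hσy, hlog1, hlog2]
      have hfact : (r/q^2) * (C * G) - (1/q) * (C * G * (r * Real.log y))
          - ((r/q^2) * (C * (Y*G)) - (1/q) * (C * (Y*G) * (r * (Real.log σ + Real.log y)))
            + ((1 - Y)/q) * (- C * G * (r * Real.log y)))
          = (r/q^2) * (C * G) * (1 - Y + Y * (q * Real.log σ)) := by
        field_simp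
        ring
      nlinarith [mul_nonneg (mul_nonneg (le_of_lt (show (0:ℝ) < r/q^2 by positivity))
        (mul_nonneg hC (le_of_lt hGpos))) hkey, hfact]
  have hsplit : ((1 - σ^q)/q) * (B * y^p - C * y^q * Real.log (y^r))
      = ((1 - σ^q)/q) * (B * y^p) + ((1 - σ^q)/q) * (- C * y^q * Real.log (y^r)) := by ring
  linarith [hBpart, hCpart, hsplit]



/-- full pointwise inequality for the difference part -/
lemma a_pointwise {p : ℕ} (hp2 : 2 ≤ p) (hpe : Even p) {q : ℝ} (hpq : (p:ℝ) < q)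
    {s t : ℝ} (hs : 0 ≤ s) (ht : 0 ≤ t) (x y : ℝ) :
    (1/(p:ℝ)) * |s*(max y 0 - max x 0) + t*(min y 0 - min x 0)|^p
    + ((1 - s^q)/q) * (|y - x|^(p-2) * (y-x) * (max y 0 - max x 0))
    + ((1 - t^q)/q) * (|y - x|^(p-2) * (y-x) * (min y 0 - min x 0))
    + ((1 - s^p)/(p:ℝ) - (1 - s^q)/q) * |max y 0 - max x 0|^p
    + ((1 - t^p)/(p:ℝ) - (1 - t^q)/q) * |min y 0 - min x 0|^p
    + (∑ i ∈ Finset.Icc 1 (p/2 - 1), ∑ j ∈ Finset.Icc 1 (i-1),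
        (2:ℝ)^(i-j) * |max y 0 - max x 0|^(p-(i+j)) * |min y 0 - min x 0|^(i+j)
          * Theta p s t i j)
    ≤ (1/(p:ℝ)) * |y - x|^p := by
  set A := max y 0 - max x 0 with hA
  set B := min y 0 - min x 0 with hB
  have hsum : A + B = y - x := by
    rw [hA, hB]
    have h1 : max y 0 + min y 0 = y + 0 := max_add_min y 0
    have h2 : max x 0 + min x 0 = x + 0 := max_add_min x 0
    linarith
  have hsign : 0 ≤ A * B := sign_coherence x y
  rw [← hsum]
  rcases mul_nonneg_iff.mp hsign with ⟨ha, hb⟩|⟨ha, hb⟩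
  · -- both nonneg
    have habs1 : |A + B| = A + B := abs_of_nonneg (by linarith)
    have habs2 : |s*A + t*B| = s*A + t*B :=
      abs_of_nonneg (add_nonneg (mul_nonneg hs ha) (mul_nonneg ht hb))
    have habs3 : |A| = A := abs_of_nonneg ha
    have habs4 : |B| = B := abs_of_nonneg hb
    rw [habs1, habs2, habs3, habs4]
    have E1 : (A+B)^(p-2) * (A+B) * A = (A+B)^(p-1) * A := by
      rw [show p-1 = (p-2)+1 by omega, pow_succ]
    have E2 : (A+B)^(p-2) * (A+B) * B = (A+B)^(p-1) * B := by
      rw [show p-1 = (p-2)+1 by omega, pow_succ]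
    rw [E1, E2]
    exact core p hp2 hpe q hpq hs ht ha hb
  · -- both nonpos
    have hα : (0:ℝ) ≤ -A := by linarith
    have hβ : (0:ℝ) ≤ -B := by linarith
    have habs1 : |A + B| = -A + -B := by rw [abs_of_nonpos (by linarith)]; ring
    have habs2 : |s*A + t*B| = s*(-A) + t*(-B) := by
      rw [abs_of_nonpos]; · ring
      have h1 : s*A ≤ 0 := mul_nonpos_of_nonneg_of_nonpos hs ha
      have h2 : t*B ≤ 0 := mul_nonpos_of_nonneg_of_nonpos ht hb
      linarith
    have habs3 : |A| = -A := abs_of_nonpos ha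
    have habs4 : |B| = -B := abs_of_nonpos hb
    rw [habs1, habs2, habs3, habs4]
    have E1 : (-A + -B)^(p-2) * (A+B) * A = (-A + -B)^(p-1) * (-A) := by
      rw [show p-1 = (p-2)+1 by omega, pow_succ]; ring
    have E2 : (-A + -B)^(p-2) * (A+B) * B = (-A + -B)^(p-1) * (-B) := by
      rw [show p-1 = (p-2)+1 by omega, pow_succ]; ring
    rw [E1, E2]
    exact core p hp2 hpe q hpq hs ht hα hβ

/-- full pointwise inequality for the potential/log part -/
lemma bc_pointwise {p : ℕ} (hp2 : 2 ≤ p) {q r : ℝ} (hpq : (p:ℝ) < q) (hr : 1 ≤ r)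
    {B C s t : ℝ} (hB : 0 ≤ B) (hC : 0 ≤ C) (hs : 0 ≤ s) (ht : 0 ≤ t) (x : ℝ) :
    (1/(p:ℝ)) * (B * |s * max x 0 + t * min x 0|^p)
    + (r/q^2) * (C * |s * max x 0 + t * min x 0|^q)
    - (1/q) * (C * |s * max x 0 + t * min x 0|^q * Real.log (|s * max x 0 + t * min x 0|^r))
    + ((1-s^q)/q) * (B * |x|^(p-2) * x * max x 0 - C * |x|^(q-2) * x * max x 0 * Real.log (|x|^r))
    + ((1-t^q)/q) * (B * |x|^(p-2) * x * min x 0 - C * |x|^(q-2) * x * min x 0 * Real.log (|x|^r))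
    + ((1-s^p)/(p:ℝ) - (1-s^q)/q) * (B * |max x 0|^p)
    + ((1-t^p)/(p:ℝ) - (1-t^q)/q) * (B * |min x 0|^p)
    ≤ (1/(p:ℝ)) * (B * |x|^p) + (r/q^2) * (C * |x|^q) - (1/q) * (C * |x|^q * Real.log (|x|^r)) := by
  have hppos : (0:ℝ) < p := by positivity
  have hq : (0:ℝ) < q := lt_trans hppos hpq
  rcases lt_trichotomy x 0 with hx|hx|hx
  · -- x < 0 : use helper with σ = t, y = -x
    set y := -x with hy
    have hy' : 0 < y := by rw [hy]; linarith
    have e1 : max x 0 = 0 := max_eq_right (le_of_lt hx)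
    have e2 : min x 0 = x := min_eq_left (le_of_lt hx)
    have e3 : |x| = y := by rw [abs_of_neg hx]
    rw [e1, e2, e3, mul_zero, zero_add]
    have e4 : |t * x| = t * y := by
      rw [abs_mul, abs_of_nonneg ht, abs_of_neg hx]
    rw [e4]
    have e5 : B * y^(p-2) * x * x = B * y^p := by
      calc B * y^(p-2) * x * x = B * (y^(p-2) * (x*x)) := by ring
        _ = B * (y^(p-2) * (y*y)) := by rw [show x*x = y*y by rw [hy]; ring]
        _ = B * (y^((p-2)+1+1)) := by ring
        _ = B * y^p := by rw [show (p-2)+1+1 = p by omega]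
    have e6 : C * y^(q-2) * x * x = C * y^q := by
      have h1 : C * y^(q-2) * x * x = C * (y^(q-2) * y^((2:ℕ):ℝ)) := by
        rw [Real.rpow_natCast, hy]; ring
      rw [h1, ← Real.rpow_add hy']
      norm_num
    rw [e5, e6]
    have H := bc_helper hp2 hpq hr hB hC ht (le_of_lt hy') (σ := t) (y := y)
    have hz1 : |(0:ℝ)|^p = 0 := by
      rw [abs_zero]; exact zero_pow (by omega)
    rw [hz1]
    simp only [mul_zero, zero_mul, sub_zero, add_zero, zero_sub, neg_zero, sub_self]
    linarith [H]
  · -- x = 0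
    subst hx
    simp only [max_self, min_self, mul_zero, add_zero, abs_zero]
    have hz0 : (0:ℝ)^q = 0 := Real.zero_rpow (ne_of_gt hq)
    have hz1 : (0:ℝ)^p = 0 := zero_pow (by omega)
    rw [hz0, hz1]
    simp
  · -- x > 0 : use helper with σ = s, y = x
    have e1 : max x 0 = x := max_eq_left (le_of_lt hx)
    have e2 : min x 0 = 0 := min_eq_right (le_of_lt hx)
    have e3 : |x| = x := abs_of_pos hx
    rw [e1, e2, e3, mul_zero, add_zero]
    have e4 : |s * x| = s * x := abs_of_nonneg (mul_nonneg hs (le_of_lt hx))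
    rw [e4]
    have e5 : B * x^(p-2) * x * x = B * x^p := by
      calc B * x^(p-2) * x * x = B * (x^((p-2)+1+1)) := by ring
        _ = B * x^p := by rw [show (p-2)+1+1 = p by omega]
    have e6 : C * x^(q-2) * x * x = C * x^q := by
      have h1 : C * x^(q-2) * x * x = C * (x^(q-2) * x^((2:ℕ):ℝ)) := by
        rw [Real.rpow_natCast]; ring
      rw [h1, ← Real.rpow_add hx]
      norm_num
    rw [e5, e6]
    have H := bc_helper hp2 hpq hr hB hC hs (le_of_lt hx) (σ := s) (y := x)
    have hz1 : |(0:ℝ)|^p = 0 := by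
      rw [abs_zero]; exact zero_pow (by omega)
    rw [hz1]
    simp only [mul_zero, zero_mul, sub_zero, add_zero, zero_sub, neg_zero, sub_self]
    linarith [H]


/-- convenient collapse lemmas -/
lemma pow_collapse {p : ℕ} (hp2 : 2 ≤ p) (z : ℝ) : z^(p-2) * z * z = z^p := by
  rw [← pow_succ, ← pow_succ, show p-2+1+1 = p by omega]

lemma rpow_collapse {q : ℝ} (hq : 2 < q) (x : ℝ) : |x|^(q-2) * |x| * |x| = |x|^q := by
  rcases eq_or_ne x 0 with h|h
  · subst h
    rw [abs_zero, Real.zero_rpow (by linarith : q - 2 ≠ 0), Real.zero_rpow (by linarith : q ≠ 0)]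
    ring
  · have hx : 0 < |x| := abs_pos.mpr h
    have h1 : |x|^(q-2) * |x| * |x| = |x|^(q-2) * |x|^((2:ℕ):ℝ) := by
      rw [Real.rpow_natCast]; ring
    rw [h1, ← Real.rpow_add hx]
    norm_num

lemma bnd1 {A d e : ℝ} (hA : 0 ≤ A) (hde : |e| ≤ |d|) {p : ℕ} (hp2 : 2 ≤ p) :
    |A * |d|^(p-2) * d * e| ≤ A * |d|^p := by
  rw [abs_mul, abs_mul, abs_mul, abs_of_nonneg hA,
    abs_of_nonneg (pow_nonneg (abs_nonneg d) _)]
  calc A * |d|^(p-2) * |d| * |e| ≤ A * |d|^(p-2) * |d| * |d| := by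
        apply mul_le_mul_of_nonneg_left hde
        positivity
    _ = A * (|d|^(p-2) * |d| * |d|) := by ring
    _ = A * |d|^p := by rw [pow_collapse hp2]

lemma bnd2 {C x y L : ℝ} (hC : 0 ≤ C) (hyx : |y| ≤ |x|) {q : ℝ} (hq : 2 < q) :
    |C * |x|^(q-2) * x * y * L| ≤ C * (|x|^q * |L|) := by
  rw [abs_mul, abs_mul, abs_mul, abs_mul, abs_of_nonneg hC,
    abs_of_nonneg (Real.rpow_nonneg (abs_nonneg x) _)]
  calc C * |x|^(q-2) * |x| * |y| * |L| ≤ C * |x|^(q-2) * |x| * |x| * |L| := by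
        apply mul_le_mul_of_nonneg_right _ (abs_nonneg L)
        apply mul_le_mul_of_nonneg_left hyx
        positivity
    _ = C * ((|x|^(q-2) * |x| * |x|) * |L|) := by ring
    _ = C * (|x|^q * |L|) := by rw [rpow_collapse hq]

theorem stmt5 (p : ℕ) (hp2 : 2 ≤ p) (hpe : Even p)
    (q r : ℝ) (hpq : (p : ℝ) < q) (hr : 1 ≤ r)
    (a b c : ℤ → ℝ)
    (ha : ∀ n, 0 < a n) (hb : ∀ n, 0 < b n) (hc : ∀ n, 0 < c n)
    (b0 : ℝ) (hb0 : 0 < b0) (hbb : ∀ n, b0 ≤ b n)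
    (hbinf : Tendsto b cofinite atTop)
    (c0 : ℝ) (hc0 : 0 < c0) (hcc : ∀ n, c n ≤ c0)
    (hcsum : Summable c)
    (u : ℤ → ℝ) (hu : memD a b c p q r u)
    (s t : ℝ) (hs : 0 ≤ s) (ht : 0 ≤ t) :
    (∀ i ∈ Finset.Icc 1 (p / 2 - 1), ∀ j ∈ Finset.Icc 1 (i - 1),
      0 ≤ Theta p s t i j) ∧
    En a b c p q r (fun n => s * pos u n + t * neg u n)
        + ((1 - s ^ q) / q) * pr a b c p q r u (pos u)
        + ((1 - t ^ q) / q) * pr a b c p q r u (neg u)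
        + ((1 - s ^ p) / (p : ℝ) - (1 - s ^ q) / q) * dnorm a b p (pos u) ^ p
        + ((1 - t ^ p) / (p : ℝ) - (1 - t ^ q) / q) * dnorm a b p (neg u) ^ p
        + (∑' n : ℤ, a n *
            ∑ i ∈ Finset.Icc 1 (p / 2 - 1), ∑ j ∈ Finset.Icc 1 (i - 1),
              (2 : ℝ) ^ (i - j) * |dlt (pos u) n| ^ (p - (i + j))
                * |dlt (neg u) n| ^ (i + j) * Theta p s t i j)
      ≤ En a b c p q r u := by
  obtain ⟨huE, huLog⟩ := hu
  have hppos : (0:ℝ) < p := by positivity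
  have hp0 : p ≠ 0 := by omega
  have hq0 : (0:ℝ) < q := lt_trans hppos hpq
  have hq2 : (2:ℝ) < q := lt_of_le_of_lt (by exact_mod_cast hp2) hpq
  have hr0 : (0:ℝ) < r := lt_of_lt_of_le one_pos hr
  have hqp : (0:ℝ) < q - p := by linarith
  -- Part 1 : Theta nonneg
  have hθ : ∀ i ∈ Finset.Icc 1 (p / 2 - 1), ∀ j ∈ Finset.Icc 1 (i - 1),
      0 ≤ Theta p s t i j := by
    intro i hi j hj
    obtain ⟨hi1, hi2⟩ := Finset.mem_Icc.mp hi
    obtain ⟨hj1, hj2⟩ := Finset.mem_Icc.mp hj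
    exact theta_nonneg p hp2 hpe hs ht hi1 hi2 hj1 hj2
  refine ⟨hθ, ?_⟩
  -- notation
  set w : ℤ → ℝ := fun n => s * pos u n + t * neg u n with hw
  -- nonnegativity of nsum summands
  have hnn : ∀ (v : ℤ → ℝ) (n : ℤ), 0 ≤ nsum a b p v n := by
    intro v n
    exact add_nonneg (mul_nonneg (ha n).le (by positivity)) (mul_nonneg (hb n).le (by positivity))
  -- dnorm ^ p = tsum
  have hdnorm : ∀ v : ℤ → ℝ, dnorm a b p v ^ p = ∑' n, nsum a b p v n := by
    intro v
    have hT : 0 ≤ ∑' n, nsum a b p v n := tsum_nonneg (fun n => hnn v n)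
    rw [dnorm, ← Real.rpow_natCast ((∑' n, nsum a b p v n) ^ ((p:ℝ)⁻¹)) p,
      ← Real.rpow_mul hT, inv_mul_cancel₀ (by exact_mod_cast hp0 : (p:ℝ) ≠ 0), Real.rpow_one]
  -- pointwise abs bounds
  have habs_pos : ∀ n, |pos u n| ≤ |u n| := by
    intro n
    rcases le_total (u n) 0 with h|h
    · rw [pos, max_eq_right h, abs_zero]; exact abs_nonneg _
    · rw [pos, max_eq_left h]
  have habs_neg : ∀ n, |neg u n| ≤ |u n| := by
    intro n
    rcases le_total (u n) 0 with h|h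
    · rw [neg, min_eq_left h]
    · rw [neg, min_eq_right h, abs_zero]; exact abs_nonneg _
  have habs_dpos : ∀ n, |dlt (pos u) n| ≤ |dlt u n| := by
    intro n
    exact abs_max_sub_max_le_abs (u (n+1)) (u n) 0
  have habs_dneg : ∀ n, |dlt (neg u) n| ≤ |dlt u n| := by
    intro n
    have := abs_min_sub_min_le_max (u (n+1)) 0 (u n) 0
    simpa [dlt, neg, abs_nonneg] using this.trans (by
      rw [sub_self, abs_zero]
      exact max_le (le_refl _) (abs_nonneg _))
  have habs_w : ∀ n, |w n| ≤ (s+t) * |u n| := by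
    intro n
    calc |w n| ≤ |s * pos u n| + |t * neg u n| := abs_add_le _ _
      _ = s * |pos u n| + t * |neg u n| := by
          rw [abs_mul, abs_mul, abs_of_nonneg hs, abs_of_nonneg ht]
      _ ≤ s * |u n| + t * |u n| := by
          exact add_le_add (mul_le_mul_of_nonneg_left (habs_pos n) hs)
            (mul_le_mul_of_nonneg_left (habs_neg n) ht)
      _ = (s+t) * |u n| := by ring
  have habs_dw : ∀ n, |dlt w n| ≤ (s+t) * |dlt u n| := by
    intro n
    have h1 : dlt w n = s * dlt (pos u) n + t * dlt (neg u) n := by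
      simp only [dlt, hw]; ring
    rw [h1]
    calc |s * dlt (pos u) n + t * dlt (neg u) n|
        ≤ |s * dlt (pos u) n| + |t * dlt (neg u) n| := abs_add_le _ _
      _ = s * |dlt (pos u) n| + t * |dlt (neg u) n| := by
          rw [abs_mul, abs_mul, abs_of_nonneg hs, abs_of_nonneg ht]
      _ ≤ s * |dlt u n| + t * |dlt u n| := by
          exact add_le_add (mul_le_mul_of_nonneg_left (habs_dpos n) hs)
            (mul_le_mul_of_nonneg_left (habs_dneg n) ht)
      _ = (s+t) * |dlt u n| := by ring
  -- eventual smallness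
  have hsmall : ∀ᶠ n in cofinite, |u n| ≤ 1 ∧ (s+t) * |u n| ≤ 1 := by
    have hten : Tendsto (nsum a b p u) cofinite (nhds 0) := huE.tendsto_cofinite_zero
    set δ : ℝ := 1/(1+s+t) with hδ
    have hδpos : 0 < δ := by rw [hδ]; positivity
    have hδ1 : δ ≤ 1 := by
      rw [hδ, div_le_one (by linarith)]; linarith
    have hev : ∀ᶠ n in cofinite, nsum a b p u n < b0 * δ^p :=
      hten.eventually_lt_const (by positivity)
    refine hev.mono (fun n hn => ?_)
    have h1 : b0 * |u n|^p ≤ nsum a b p u n := by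
      have h2 : b0 * |u n|^p ≤ b n * |u n|^p :=
        mul_le_mul_of_nonneg_right (hbb n) (by positivity)
      have h3 : 0 ≤ a n * |dlt u n|^p := mul_nonneg (ha n).le (by positivity)
      unfold nsum; linarith
    have h4 : |u n|^p < δ^p := by
      have := lt_of_le_of_lt h1 hn
      nlinarith [this]
    have h5 : |u n| < δ := by
      by_contra hcon
      push_neg at hcon
      exact absurd (pow_le_pow_left₀ hδpos.le hcon p) (not_le.mpr h4)
    constructor
    · linarith
    · calc (s+t) * |u n| ≤ (s+t) * δ := mul_le_mul_of_nonneg_left h5.le (by linarith)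
        _ = (s+t)/(1+s+t) := by rw [hδ]; ring
        _ ≤ 1 := by rw [div_le_one (by linarith)]; linarith
  -- rpow dominance : |x|^q ≤ |x|^p when |x| ≤ 1
  have hqle : ∀ x : ℝ, |x| ≤ 1 → |x|^q ≤ |x|^p := by
    intro x hx
    have h1 : |x|^q ≤ |x|^((p:ℕ):ℝ) :=
      Real.rpow_le_rpow_of_exponent_ge' (abs_nonneg x) hx (by positivity) (le_of_lt hpq)
    rwa [Real.rpow_natCast] at h1
  -- |w| ≤ 1 eventually etc.
  have hwsmall : ∀ᶠ n in cofinite, |w n| ≤ 1 :=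
    hsmall.mono (fun n hn => le_trans (habs_w n) hn.2)
  -- pow comparisons without smallness
  have hnsum_pos_le : ∀ n, nsum a b p (pos u) n ≤ nsum a b p u n := by
    intro n
    unfold nsum
    have h1 : |dlt (pos u) n|^p ≤ |dlt u n|^p := pow_le_pow_left₀ (abs_nonneg _) (habs_dpos n) p
    have h2 : |pos u n|^p ≤ |u n|^p := pow_le_pow_left₀ (abs_nonneg _) (habs_pos n) p
    exact add_le_add (mul_le_mul_of_nonneg_left h1 (ha n).le)
      (mul_le_mul_of_nonneg_left h2 (hb n).le)
  have hnsum_neg_le : ∀ n, nsum a b p (neg u) n ≤ nsum a b p u n := by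
    intro n
    unfold nsum
    have h1 : |dlt (neg u) n|^p ≤ |dlt u n|^p := pow_le_pow_left₀ (abs_nonneg _) (habs_dneg n) p
    have h2 : |neg u n|^p ≤ |u n|^p := pow_le_pow_left₀ (abs_nonneg _) (habs_neg n) p
    exact add_le_add (mul_le_mul_of_nonneg_left h1 (ha n).le)
      (mul_le_mul_of_nonneg_left h2 (hb n).le)
  have hnsum_w_le : ∀ n, nsum a b p w n ≤ (s+t)^p * nsum a b p u n := by
    intro n
    unfold nsum
    have h1 : |dlt w n|^p ≤ (s+t)^p * |dlt u n|^p := by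
      calc |dlt w n|^p ≤ ((s+t) * |dlt u n|)^p := pow_le_pow_left₀ (abs_nonneg _) (habs_dw n) p
        _ = (s+t)^p * |dlt u n|^p := mul_pow _ _ _
    have h2 : |w n|^p ≤ (s+t)^p * |u n|^p := by
      calc |w n|^p ≤ ((s+t) * |u n|)^p := pow_le_pow_left₀ (abs_nonneg _) (habs_w n) p
        _ = (s+t)^p * |u n|^p := mul_pow _ _ _
    calc a n * |dlt w n|^p + b n * |w n|^p
        ≤ a n * ((s+t)^p * |dlt u n|^p) + b n * ((s+t)^p * |u n|^p) :=
          add_le_add (mul_le_mul_of_nonneg_left h1 (ha n).le)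
            (mul_le_mul_of_nonneg_left h2 (hb n).le)
      _ = (s+t)^p * (a n * |dlt u n|^p + b n * |u n|^p) := by ring
  -- Summabilities
  have Su : Summable (nsum a b p u) := huE
  have Spos : Summable (nsum a b p (pos u)) :=
    Summable.of_nonneg_of_le (hnn _) hnsum_pos_le Su
  have Sneg : Summable (nsum a b p (neg u)) :=
    Summable.of_nonneg_of_le (hnn _) hnsum_neg_le Su
  have Sw : Summable (nsum a b p w) :=
    Summable.of_nonneg_of_le (hnn _) hnsum_w_le (Su.mul_left _)
  -- generic bound used through smallness : c n * |v n|^p ≤ (c0/b0) * K * nsum u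
  have hb_bd : ∀ n, b n * |u n|^p ≤ nsum a b p u n := by
    intro n
    have h3 : 0 ≤ a n * |dlt u n|^p := mul_nonneg (ha n).le (by positivity)
    unfold nsum; linarith
  have hcu_bd : ∀ n, |u n|^p ≤ (1/b0) * nsum a b p u n := by
    intro n
    have h1 := hb_bd n
    have h2 : b0 * |u n|^p ≤ b n * |u n|^p :=
      mul_le_mul_of_nonneg_right (hbb n) (by positivity)
    have h3 : b0 * |u n|^p ≤ nsum a b p u n := le_trans h2 h1
    calc |u n|^p = (1/b0) * (b0 * |u n|^p) := by field_simp
      _ ≤ (1/b0) * nsum a b p u n := mul_le_mul_of_nonneg_left h3 (by positivity)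
  have Scu : Summable (fun n => c n * |u n|^q) := by
    apply Summable.of_norm_bounded_eventually (g := fun n => (c0/b0) * nsum a b p u n)
      (Su.mul_left _)
    refine hsmall.mono (fun n hn => ?_)
    rw [Real.norm_eq_abs, abs_of_nonneg (mul_nonneg (hc n).le (Real.rpow_nonneg (abs_nonneg _) _))]
    calc c n * |u n|^q ≤ c0 * |u n|^p :=
          mul_le_mul (hcc n) (hqle (u n) hn.1) (Real.rpow_nonneg (abs_nonneg _) _) hc0.le
      _ ≤ c0 * ((1/b0) * nsum a b p u n) :=
          mul_le_mul_of_nonneg_left (hcu_bd n) hc0.le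
      _ = (c0/b0) * nsum a b p u n := by ring
  have Scw : Summable (fun n => c n * |w n|^q) := by
    apply Summable.of_norm_bounded_eventually
      (g := fun n => ((c0/b0) * (s+t)^p) * nsum a b p u n) (Su.mul_left _)
    refine hsmall.mono (fun n hn => ?_)
    rw [Real.norm_eq_abs, abs_of_nonneg (mul_nonneg (hc n).le (Real.rpow_nonneg (abs_nonneg _) _))]
    have hq1 : |w n|^q ≤ |w n|^p := hqle (w n) (le_trans (habs_w n) hn.2)
    have hq2 : |w n|^p ≤ (s+t)^p * |u n|^p := by
      calc |w n|^p ≤ ((s+t) * |u n|)^p := pow_le_pow_left₀ (abs_nonneg _) (habs_w n) p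
        _ = (s+t)^p * |u n|^p := mul_pow _ _ _
    calc c n * |w n|^q ≤ c0 * ((s+t)^p * |u n|^p) := by
          apply mul_le_mul (hcc n) (le_trans hq1 hq2)
            (Real.rpow_nonneg (abs_nonneg _) _) hc0.le
      _ ≤ c0 * ((s+t)^p * ((1/b0) * nsum a b p u n)) := by
          apply mul_le_mul_of_nonneg_left _ hc0.le
          exact mul_le_mul_of_nonneg_left (hcu_bd n) (by positivity)
      _ = ((c0/b0) * (s+t)^p) * nsum a b p u n := by ring
  have Slu : Summable (logSummand c q r u) := huLog
  have Slw : Summable (logSummand c q r w) := by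
    apply Summable.of_norm_bounded_eventually
      (g := fun n => ((r/(q-p)) * (c0/b0) * (s+t)^p) * nsum a b p u n) (Su.mul_left _)
    refine hsmall.mono (fun n hn => ?_)
    rw [Real.norm_eq_abs]
    unfold logSummand
    have hwle : |w n| ≤ 1 := le_trans (habs_w n) hn.2
    have h1 : |c n * |w n|^q * Real.log (|w n|^r)|
        = c n * (|w n|^q * |Real.log (|w n|^r)|) := by
      rw [abs_mul, abs_mul, abs_of_nonneg (hc n).le,
        abs_of_nonneg (Real.rpow_nonneg (abs_nonneg _) _)]
      ring
    rw [h1]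
    have h2 : |w n|^q * |Real.log (|w n|^r)| ≤ (r/(q-(p:ℝ))) * |w n|^p := by
      have := logpow_bound (abs_nonneg (w n)) hwle hr0 hpq hppos
      rwa [Real.rpow_natCast] at this
    calc c n * (|w n|^q * |Real.log (|w n|^r)|)
        ≤ c0 * ((r/(q-(p:ℝ))) * |w n|^p) := by
          apply mul_le_mul (hcc n) h2 _ hc0.le
          positivity
      _ ≤ c0 * ((r/(q-(p:ℝ))) * ((s+t)^p * ((1/b0) * nsum a b p u n))) := by
          apply mul_le_mul_of_nonneg_left _ hc0.le
          apply mul_le_mul_of_nonneg_left _ (by positivity)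
          calc |w n|^p ≤ ((s+t) * |u n|)^p := pow_le_pow_left₀ (abs_nonneg _) (habs_w n) p
            _ = (s+t)^p * |u n|^p := mul_pow _ _ _
            _ ≤ (s+t)^p * ((1/b0) * nsum a b p u n) :=
                mul_le_mul_of_nonneg_left (hcu_bd n) (by positivity)
      _ = ((r/(q-p)) * (c0/b0) * (s+t)^p) * nsum a b p u n := by ring
  -- pr summand functions
  set P1p : ℤ → ℝ := fun n => a n * |dlt u n| ^ (p - 2) * dlt u n * dlt (pos u) n
      + b n * |u n| ^ (p - 2) * u n * pos u n with hP1p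
  set P2p : ℤ → ℝ := fun n => c n * |u n| ^ (q - 2) * u n * pos u n * Real.log (|u n| ^ r)
    with hP2p
  set P1m : ℤ → ℝ := fun n => a n * |dlt u n| ^ (p - 2) * dlt u n * dlt (neg u) n
      + b n * |u n| ^ (p - 2) * u n * neg u n with hP1m
  set P2m : ℤ → ℝ := fun n => c n * |u n| ^ (q - 2) * u n * neg u n * Real.log (|u n| ^ r)
    with hP2m
  have SP1p : Summable P1p := by
    apply Summable.of_norm_bounded_eventually (g := fun n => nsum a b p u n) Su
    refine Filter.Eventually.of_forall (fun n => ?_)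
    rw [Real.norm_eq_abs, hP1p]
    calc |a n * |dlt u n| ^ (p - 2) * dlt u n * dlt (pos u) n
          + b n * |u n| ^ (p - 2) * u n * pos u n|
        ≤ |a n * |dlt u n| ^ (p - 2) * dlt u n * dlt (pos u) n|
          + |b n * |u n| ^ (p - 2) * u n * pos u n| := abs_add_le _ _
      _ ≤ a n * |dlt u n|^p + b n * |u n|^p := by
          apply add_le_add
          · exact bnd1 (ha n).le (habs_dpos n) hp2
          · have h := bnd1 (hb n).le (habs_pos n) hp2 (d := u n) (e := pos u n)
            exact h
      _ = nsum a b p u n := rfl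
  have SP1m : Summable P1m := by
    apply Summable.of_norm_bounded_eventually (g := fun n => nsum a b p u n) Su
    refine Filter.Eventually.of_forall (fun n => ?_)
    rw [Real.norm_eq_abs, hP1m]
    calc |a n * |dlt u n| ^ (p - 2) * dlt u n * dlt (neg u) n
          + b n * |u n| ^ (p - 2) * u n * neg u n|
        ≤ |a n * |dlt u n| ^ (p - 2) * dlt u n * dlt (neg u) n|
          + |b n * |u n| ^ (p - 2) * u n * neg u n| := abs_add_le _ _
      _ ≤ a n * |dlt u n|^p + b n * |u n|^p := by
          apply add_le_add
          · exact bnd1 (ha n).le (habs_dneg n) hp2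
          · exact bnd1 (hb n).le (habs_neg n) hp2
      _ = nsum a b p u n := rfl
  have SP2gen : ∀ (v : ℤ → ℝ), (∀ n, |v n| ≤ |u n|) →
      Summable (fun n => c n * |u n| ^ (q - 2) * u n * v n * Real.log (|u n| ^ r)) := by
    intro v hv
    apply Summable.of_norm_bounded_eventually
      (g := fun n => ((r/(q-p)) * (c0/b0)) * nsum a b p u n) (Su.mul_left _)
    refine hsmall.mono (fun n hn => ?_)
    rw [Real.norm_eq_abs]
    calc |c n * |u n| ^ (q - 2) * u n * v n * Real.log (|u n| ^ r)|
        ≤ c n * (|u n|^q * |Real.log (|u n|^r)|) := bnd2 (hc n).le (hv n) hq2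
      _ ≤ c n * ((r/(q-(p:ℝ))) * |u n|^p) := by
          apply mul_le_mul_of_nonneg_left _ (hc n).le
          have := logpow_bound (abs_nonneg (u n)) hn.1 hr0 hpq hppos
          rwa [Real.rpow_natCast] at this
      _ ≤ c0 * ((r/(q-(p:ℝ))) * ((1/b0) * nsum a b p u n)) := by
          apply mul_le_mul (hcc n) _ _ hc0.le
          · exact mul_le_mul_of_nonneg_left (hcu_bd n) (by positivity)
          · positivity
      _ = ((r/(q-p)) * (c0/b0)) * nsum a b p u n := by ring
  have SP2p : Summable P2p := SP2gen (pos u) habs_pos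
  have SP2m : Summable P2m := SP2gen (neg u) habs_neg
  -- theta sum function
  set θf : ℤ → ℝ := fun n => a n *
      ∑ i ∈ Finset.Icc 1 (p / 2 - 1), ∑ j ∈ Finset.Icc 1 (i - 1),
        (2 : ℝ) ^ (i - j) * |dlt (pos u) n| ^ (p - (i + j))
          * |dlt (neg u) n| ^ (i + j) * Theta p s t i j with hθf
  have hθf_nonneg : ∀ n, 0 ≤ θf n := by
    intro n
    rw [hθf]
    apply mul_nonneg (ha n).le
    apply Finset.sum_nonneg
    intro i hi
    apply Finset.sum_nonneg
    intro j hj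
    have := hθ i hi j hj
    positivity
  have hθf_le : ∀ n, θf n ≤ (∑ i ∈ Finset.Icc 1 (p / 2 - 1), ∑ j ∈ Finset.Icc 1 (i - 1),
      (2 : ℝ) ^ (i - j) * Theta p s t i j) * nsum a b p u n := by
    intro n
    rw [hθf]
    have hin : ∑ i ∈ Finset.Icc 1 (p / 2 - 1), ∑ j ∈ Finset.Icc 1 (i - 1),
        (2 : ℝ) ^ (i - j) * |dlt (pos u) n| ^ (p - (i + j))
          * |dlt (neg u) n| ^ (i + j) * Theta p s t i j
        ≤ ∑ i ∈ Finset.Icc 1 (p / 2 - 1), ∑ j ∈ Finset.Icc 1 (i - 1),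
          ((2 : ℝ) ^ (i - j) * Theta p s t i j) * |dlt u n|^p := by
      apply Finset.sum_le_sum
      intro i hi
      apply Finset.sum_le_sum
      intro j hj
      obtain ⟨hi1, hi2⟩ := Finset.mem_Icc.mp hi
      obtain ⟨hj1, hj2⟩ := Finset.mem_Icc.mp hj
      have hθij := hθ i (Finset.mem_Icc.mpr ⟨hi1, hi2⟩) j (Finset.mem_Icc.mpr ⟨hj1, hj2⟩)
      have hk : i + j ≤ p := by
        have h1 : p = 2 * (p/2) := by rcases hpe with ⟨w', hw'⟩; omega
        omega
      have h1 : |dlt (pos u) n| ^ (p - (i + j)) ≤ |dlt u n| ^ (p - (i + j)) :=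
        pow_le_pow_left₀ (abs_nonneg _) (habs_dpos n) _
      have h2 : |dlt (neg u) n| ^ (i + j) ≤ |dlt u n| ^ (i + j) :=
        pow_le_pow_left₀ (abs_nonneg _) (habs_dneg n) _
      calc (2 : ℝ) ^ (i - j) * |dlt (pos u) n| ^ (p - (i + j))
            * |dlt (neg u) n| ^ (i + j) * Theta p s t i j
          ≤ (2 : ℝ) ^ (i - j) * |dlt u n| ^ (p - (i + j))
            * |dlt u n| ^ (i + j) * Theta p s t i j := by
            apply mul_le_mul_of_nonneg_right _ hθij
            apply mul_le_mul (mul_le_mul_of_nonneg_left h1 (by positivity)) h2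
              (by positivity) (by positivity)
        _ = ((2 : ℝ) ^ (i - j) * Theta p s t i j)
              * (|dlt u n| ^ (p - (i + j)) * |dlt u n| ^ (i + j)) := by ring
        _ = ((2 : ℝ) ^ (i - j) * Theta p s t i j) * |dlt u n|^p := by
            rw [← pow_add, show p - (i+j) + (i+j) = p by omega]
    calc a n * ∑ i ∈ Finset.Icc 1 (p / 2 - 1), ∑ j ∈ Finset.Icc 1 (i - 1),
          (2 : ℝ) ^ (i - j) * |dlt (pos u) n| ^ (p - (i + j))
            * |dlt (neg u) n| ^ (i + j) * Theta p s t i j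
        ≤ a n * ∑ i ∈ Finset.Icc 1 (p / 2 - 1), ∑ j ∈ Finset.Icc 1 (i - 1),
          ((2 : ℝ) ^ (i - j) * Theta p s t i j) * |dlt u n|^p :=
          mul_le_mul_of_nonneg_left hin (ha n).le
      _ = (∑ i ∈ Finset.Icc 1 (p / 2 - 1), ∑ j ∈ Finset.Icc 1 (i - 1),
          (2 : ℝ) ^ (i - j) * Theta p s t i j) * (a n * |dlt u n|^p) := by
          rw [Finset.sum_mul, Finset.mul_sum]
          refine Finset.sum_congr rfl (fun i _ => ?_)
          rw [Finset.sum_mul, Finset.mul_sum]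
          refine Finset.sum_congr rfl (fun j _ => ?_)
          ring
      _ ≤ (∑ i ∈ Finset.Icc 1 (p / 2 - 1), ∑ j ∈ Finset.Icc 1 (i - 1),
          (2 : ℝ) ^ (i - j) * Theta p s t i j) * nsum a b p u n := by
          apply mul_le_mul_of_nonneg_left
          · have : 0 ≤ b n * |u n|^p := mul_nonneg (hb n).le (by positivity)
            unfold nsum; linarith
          · apply Finset.sum_nonneg
            intro i hi
            apply Finset.sum_nonneg
            intro j hj
            have := hθ i hi j hj
            positivity
  have Sθ : Summable θf :=
    Summable.of_nonneg_of_le hθf_nonneg hθf_le (Su.mul_left _)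
  -- master pointwise inequality
  set F : ℤ → ℝ := fun n =>
    (1/(p:ℝ)) * nsum a b p w n + (r/q^2) * (c n * |w n|^q) - (1/q) * logSummand c q r w n
    + ((1-s^q)/q) * P1p n - ((1-s^q)/q) * P2p n
    + ((1-t^q)/q) * P1m n - ((1-t^q)/q) * P2m n
    + ((1-s^p)/(p:ℝ) - (1-s^q)/q) * nsum a b p (pos u) n
    + ((1-t^p)/(p:ℝ) - (1-t^q)/q) * nsum a b p (neg u) n
    + θf n with hF
  set G : ℤ → ℝ := fun n =>
    (1/(p:ℝ)) * nsum a b p u n + (r/q^2) * (c n * |u n|^q)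
      - (1/q) * logSummand c q r u n with hG
  have hmaster : ∀ n, F n ≤ G n := by
    intro n
    have HA := a_pointwise hp2 hpe hpq hs ht (u n) (u (n+1))
    have HA' := mul_le_mul_of_nonneg_left HA (ha n).le
    have HBC := bc_pointwise hp2 hpq hr (hb n).le (hc n).le hs ht (u n)
    simp only [hF, hG, hP1p, hP2p, hP1m, hP2m, hθf, hw, nsum, logSummand, dlt, pos, neg]
    rw [show s * max (u (n+1)) 0 + t * min (u (n+1)) 0 - (s * max (u n) 0 + t * min (u n) 0)
        = s * (max (u (n+1)) 0 - max (u n) 0) + t * (min (u (n+1)) 0 - min (u n) 0) by ring]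
    linarith [HA', HBC]
  -- assemble via HasSum
  have HF : HasSum F ((1/(p:ℝ)) * (∑' n, nsum a b p w n)
      + (r/q^2) * (∑' n, c n * |w n|^q) - (1/q) * (∑' n, logSummand c q r w n)
      + ((1-s^q)/q) * (∑' n, P1p n) - ((1-s^q)/q) * (∑' n, P2p n)
      + ((1-t^q)/q) * (∑' n, P1m n) - ((1-t^q)/q) * (∑' n, P2m n)
      + ((1-s^p)/(p:ℝ) - (1-s^q)/q) * (∑' n, nsum a b p (pos u) n)
      + ((1-t^p)/(p:ℝ) - (1-t^q)/q) * (∑' n, nsum a b p (neg u) n)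
      + (∑' n, θf n)) := by
    exact ((((((((((Sw.hasSum.mul_left _).add (Scw.hasSum.mul_left _)).sub
      (Slw.hasSum.mul_left _)).add (SP1p.hasSum.mul_left _)).sub
      (SP2p.hasSum.mul_left _)).add (SP1m.hasSum.mul_left _)).sub
      (SP2m.hasSum.mul_left _)).add (Spos.hasSum.mul_left _)).add
      (Sneg.hasSum.mul_left _)).add Sθ.hasSum)
  have HG : HasSum G ((1/(p:ℝ)) * (∑' n, nsum a b p u n)
      + (r/q^2) * (∑' n, c n * |u n|^q) - (1/q) * (∑' n, logSummand c q r u n)) := by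
    exact ((Su.hasSum.mul_left _).add (Scu.hasSum.mul_left _)).sub (Slu.hasSum.mul_left _)
  have key : ((1/(p:ℝ)) * (∑' n, nsum a b p w n)
      + (r/q^2) * (∑' n, c n * |w n|^q) - (1/q) * (∑' n, logSummand c q r w n)
      + ((1-s^q)/q) * (∑' n, P1p n) - ((1-s^q)/q) * (∑' n, P2p n)
      + ((1-t^q)/q) * (∑' n, P1m n) - ((1-t^q)/q) * (∑' n, P2m n)
      + ((1-s^p)/(p:ℝ) - (1-s^q)/q) * (∑' n, nsum a b p (pos u) n)
      + ((1-t^p)/(p:ℝ) - (1-t^q)/q) * (∑' n, nsum a b p (neg u) n)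
      + (∑' n, θf n))
      ≤ ((1/(p:ℝ)) * (∑' n, nsum a b p u n)
      + (r/q^2) * (∑' n, c n * |u n|^q) - (1/q) * (∑' n, logSummand c q r u n)) := by
    rw [← HF.tsum_eq, ← HG.tsum_eq]
    exact Summable.tsum_le_tsum hmaster HF.summable HG.summable
  -- final rewrite
  unfold En pr
  rw [hdnorm, hdnorm, hdnorm, hdnorm]
  rw [← hP1p, ← hP2p, ← hP1m, ← hP2m]
  have e1 : ((1-s^q)/q) * ((∑' n, P1p n) - (∑' n, P2p n))
      = ((1-s^q)/q) * (∑' n, P1p n) - ((1-s^q)/q) * (∑' n, P2p n) := by ring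
  have e2 : ((1-t^q)/q) * ((∑' n, P1m n) - (∑' n, P2m n))
      = ((1-t^q)/q) * (∑' n, P1m n) - ((1-t^q)/q) * (∑' n, P2m n) := by ring
  have e3 : (∑' n, P1p n) = tsum P1p := rfl
  have e4 : (∑' n, P2p n) = tsum P2p := rfl
  have e5 : (∑' n, P1m n) = tsum P1m := rfl
  have e6 : (∑' n, P2m n) = tsum P2m := rfl
  have e7 : (∑' n, θf n) = tsum θf := rfl
  linarith [key, e1, e2, e3, e4, e5, e6, e7]


end DPLap
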